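/- Existence of the temperature in target-entropy sampling: let p : Fin n → ℝ (n ≥ 2) be a strictly positive probability vector with a unique maximal entry, and let E be any real with 0 < E < log n. If p is not uniform, then there exists α > 0 such that H(p^α) = E, where p^α_i = p_i^α / ∑_j p_j^α. -/

import Mathlib

open Finset Real Filter Topology

noncomputable def shannonEntropy {n : ℕ} (p : Fin n → ℝ) : ℝ :=
  -∑ i, p i * Real.log (p i)

noncomputable def tempered {n : ℕ} (p : Fin n → ℝ) (α : ℝ) : Fin n → ℝ :=
  fun i => p i ^ α / ∑ j, p j ^ α

lemma shannonEntropy_eq_sum_negMulLog {n : ℕ} (q : Fin n → ℝ) :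
    shannonEntropy q = ∑ i, Real.negMulLog (q i) := by
  simp [shannonEntropy, Real.negMulLog, neg_mul, ← Finset.sum_neg_distrib]

/-- Existence of the temperature in target-entropy sampling. -/
theorem exists_target_entropy_temperature {n : ℕ} (hn : 2 ≤ n)
    (p : Fin n → ℝ) (E : ℝ)
    (hpos : ∀ i, 0 < p i) (hsum : ∑ i, p i = 1)
    (hmax : ∃ i : Fin n, ∀ j : Fin n, j ≠ i → p j < p i)
    (hnonunif : ∃ i j : Fin n, p i ≠ p j)
    (hE0 : 0 < E) (hEn : E < Real.log n) :
    ∃ α : ℝ, 0 < α ∧ shannonEntropy (tempered p α) = E := by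
  obtain ⟨i₀, hi₀⟩ := hmax
  have hSpos : ∀ α : ℝ, 0 < ∑ j, p j ^ α := fun α =>
    Finset.sum_pos (fun j _ => Real.rpow_pos_of_pos (hpos j) α) ⟨i₀, Finset.mem_univ i₀⟩
  have hgcont : ∀ i : Fin n, Continuous fun α : ℝ => p i ^ α := by
    intro i
    have : (fun α : ℝ => p i ^ α) = fun α : ℝ => Real.exp (Real.log (p i) * α) := by
      funext α; rw [Real.rpow_def_of_pos (hpos i)]
    rw [this]
    exact Real.continuous_exp.comp (continuous_const.mul continuous_id)
  have hScont : Continuous fun α : ℝ => ∑ j, p j ^ α :=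
    continuous_finset_sum _ fun j _ => hgcont j
  have hqcont : ∀ i, Continuous fun α => tempered p α i := fun i =>
    (hgcont i).div hScont fun α => (hSpos α).ne'
  set f : ℝ → ℝ := fun α => shannonEntropy (tempered p α) with hf
  have hfcont : Continuous f := by
    have : f = fun α => ∑ i, Real.negMulLog (tempered p α i) := by
      funext α; exact shannonEntropy_eq_sum_negMulLog _
    rw [this]
    exact continuous_finset_sum _ fun i _ =>
      Real.continuous_negMulLog.comp (hqcont i)
  -- value at 0
  have hnne : (n : ℝ) ≠ 0 := by positivity
  have hq0 : ∀ i, tempered p 0 i = 1 / n := by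
    intro i
    simp [tempered, Real.rpow_zero, Finset.card_univ]
  have hf0 : f 0 = Real.log n := by
    rw [hf]
    simp only [shannonEntropy_eq_sum_negMulLog]
    rw [Finset.sum_congr rfl fun i _ => by rw [hq0 i]]
    rw [Finset.sum_const, Finset.card_univ, Fintype.card_fin, nsmul_eq_mul]
    rw [Real.negMulLog, one_div, Real.log_inv]
    field_simp
  -- limits at infinity
  have hq_ne : ∀ i : Fin n, i ≠ i₀ →
      Tendsto (fun α => tempered p α i) atTop (nhds 0) := by
    intro i hi
    have hr0 : 0 < p i / p i₀ := div_pos (hpos i) (hpos i₀)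
    have hr1 : p i / p i₀ < 1 := (div_lt_one (hpos i₀)).2 (hi₀ i hi)
    have hbound : ∀ α : ℝ, tempered p α i ≤ (p i / p i₀) ^ α := by
      intro α
      rw [Real.div_rpow (hpos i).le (hpos i₀).le, tempered]
      apply div_le_div_of_nonneg_left (Real.rpow_pos_of_pos (hpos i) α).le
        (Real.rpow_pos_of_pos (hpos i₀) α)
      exact Finset.single_le_sum (fun j _ => (Real.rpow_pos_of_pos (hpos j) α).le)
        (Finset.mem_univ i₀)
    refine squeeze_zero (fun α => ?_) hbound
      (tendsto_rpow_atTop_of_base_lt_one _ (by linarith) hr1)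
    exact le_of_lt (div_pos (Real.rpow_pos_of_pos (hpos i) α) (hSpos α))
  have hqsum : ∀ α : ℝ, ∑ j, tempered p α j = 1 := by
    intro α
    simp only [tempered]
    rw [← Finset.sum_div]
    exact div_self (hSpos α).ne'
  have hq_i₀ : Tendsto (fun α => tempered p α i₀) atTop (nhds 1) := by
    have heq : ∀ α : ℝ, tempered p α i₀ =
        1 - ∑ j ∈ Finset.univ.erase i₀, tempered p α j := by
      intro α
      have := Finset.add_sum_erase Finset.univ (tempered p α) (Finset.mem_univ i₀)
      rw [hqsum α] at this
      linarith
    simp only [heq]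
    have : Tendsto (fun α => ∑ j ∈ Finset.univ.erase i₀, tempered p α j)
        atTop (nhds 0) := by
      have := tendsto_finset_sum (Finset.univ.erase i₀)
        (fun j hj => hq_ne j (Finset.ne_of_mem_erase hj))
      simpa using this
    simpa using (tendsto_const_nhds.sub this)
  have hftop : Tendsto f atTop (nhds 0) := by
    have : f = fun α => ∑ i, Real.negMulLog (tempered p α i) := by
      funext α; exact shannonEntropy_eq_sum_negMulLog _
    rw [this]
    have h : ∀ i ∈ Finset.univ, Tendsto (fun α => Real.negMulLog (tempered p α i))
        atTop (nhds 0) := by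
      intro i _
      by_cases hi : i = i₀
      · subst hi
        have := (Real.continuous_negMulLog.tendsto 1).comp hq_i₀
        simpa [Function.comp_def] using this
      · have := (Real.continuous_negMulLog.tendsto 0).comp (hq_ne i hi)
        simpa [Function.comp_def] using this
    have := tendsto_finset_sum Finset.univ h
    simpa using this
  -- pick A with f A < E
  obtain ⟨A, hA1, hAE⟩ := ((eventually_ge_atTop (1:ℝ)).and
    (hftop.eventually_lt_const hE0)).exists
  have h0A : (0:ℝ) ≤ A := by linarith
  have hmem : E ∈ Set.Icc (f A) (f 0) := ⟨hAE.le, by rw [hf0]; exact hEn.le⟩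
  obtain ⟨c, hc, hfc⟩ := intermediate_value_Icc' h0A hfcont.continuousOn hmem
  refine ⟨c, ?_, hfc⟩
  rcases lt_or_eq_of_le hc.1 with h | h
  · exact h
  · exfalso; rw [← h] at hfc; rw [hf0] at hfc; linarith
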